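/- Let R be a commutative ring and C = R[x,y]/(x², y², xy). Let π₁ : C → R[x]/(x²) and π₂ : C → R[y]/(y²) be the R-algebra homomorphisms sending y to 0 and x to 0 respectively. Then for any p ∈ R[x]/(x²) and q ∈ R[y]/(y²) whose images in R under the substitutions x ↦ 0 and y ↦ 0 coincide, there exists a unique c ∈ C with π₁(c) = p and π₂(c) = q. -/
import Mathlib


open MvPolynomial

/-- The ideal `(x², y², xy)` of `R[x,y]`, so that the quotient is the function algebra `C`
of the infinitesimal object `D²{(1,2)} = D(2)`. -/
noncomputable def idealC (R : Type*) [CommRing R] : Ideal (MvPolynomial (Fin 2) R) :=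
  Ideal.span {X 0 ^ 2, X 1 ^ 2, X 0 * X 1}

/-- The ideal `(x²)` of the univariate polynomial ring `R[x]`, so that the quotient is the
function algebra of `D`. -/
noncomputable def idealD (R : Type*) [CommRing R] : Ideal (Polynomial R) :=
  Ideal.span {Polynomial.X ^ 2}

section Aux

variable {R : Type*} [CommRing R]

lemma mkD_eq_zero_iff (f : Polynomial R) :
    Ideal.Quotient.mk (idealD R) f = 0 ↔ f.coeff 0 = 0 ∧ f.coeff 1 = 0 := by
  rw [Ideal.Quotient.eq_zero_iff_mem, idealD, Ideal.mem_span_singleton,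
    Polynomial.X_pow_dvd_iff]
  constructor
  · intro h; exact ⟨h 0 (by norm_num), h 1 (by norm_num)⟩
  · rintro ⟨h0, h1⟩ d hd
    interval_cases d <;> assumption

lemma mkD_rep (p : Polynomial R ⧸ idealD R) :
    ∃ a b : R, p = Ideal.Quotient.mk (idealD R) (Polynomial.C a + Polynomial.C b * Polynomial.X) := by
  obtain ⟨f, rfl⟩ := Ideal.Quotient.mk_surjective p
  refine ⟨f.coeff 0, f.coeff 1, ?_⟩
  rw [eq_comm, Ideal.Quotient.mk_eq_mk_iff_sub_mem, idealD, Ideal.mem_span_singleton,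
    Polynomial.X_pow_dvd_iff]
  intro d hd
  interval_cases d <;> simp

lemma eps_apply (ε : (Polynomial R ⧸ idealD R) →ₐ[R] R)
    (hε : ε (Ideal.Quotient.mk (idealD R) Polynomial.X) = 0) (a b : R) :
    ε (Ideal.Quotient.mk (idealD R) (Polynomial.C a + Polynomial.C b * Polynomial.X)) = a := by
  have hC : ∀ r : R, Ideal.Quotient.mk (idealD R) (Polynomial.C r) = algebraMap R _ r := by
    intro r
    rw [← Polynomial.algebraMap_eq, Ideal.Quotient.mk_algebraMap]
  simp [map_add, map_mul, hC, hε]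

lemma mem_idealC (g : MvPolynomial (Fin 2) R) (h0 : coeff 0 g = 0)
    (hx : coeff (Finsupp.single 0 1) g = 0) (hy : coeff (Finsupp.single 1 1) g = 0) :
    g ∈ idealC R := by
  rw [g.as_sum]
  refine Ideal.sum_mem _ ?_
  intro m hm
  have hmem : ∀ u ∈ ({X 0 ^ 2, X 1 ^ 2, X 0 * X 1} : Set (MvPolynomial (Fin 2) R)),
      u ∈ idealC R := fun u hu => Ideal.subset_span hu
  have hdec : m = Finsupp.single 0 (m 0) + Finsupp.single 1 (m 1) := by
    ext i; fin_cases i <;> simp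
  have hmon : (monomial m) (coeff m g) =
      MvPolynomial.C (coeff m g) * X 0 ^ (m 0) * X 1 ^ (m 1) := by
    rw [X_pow_eq_monomial, X_pow_eq_monomial, C_mul_monomial, monomial_mul, ← hdec]
    simp only [mul_one]
  by_cases ha : 2 ≤ m 0
  · have h2 : (X 0 : MvPolynomial (Fin 2) R) ^ 2 ∈ idealC R :=
      Ideal.subset_span (by simp)
    have hp : (X 0 : MvPolynomial (Fin 2) R) ^ (m 0) = X 0 ^ (m 0 - 2) * X 0 ^ 2 := by
      rw [← pow_add]; congr 1; omega
    rw [hmon, hp]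
    exact Ideal.mul_mem_right _ _ (Ideal.mul_mem_left _ _ (Ideal.mul_mem_left _ _ h2))
  by_cases hb : 2 ≤ m 1
  · have h2 : (X 1 : MvPolynomial (Fin 2) R) ^ 2 ∈ idealC R :=
      Ideal.subset_span (by simp)
    have hp : (X 1 : MvPolynomial (Fin 2) R) ^ (m 1) = X 1 ^ (m 1 - 2) * X 1 ^ 2 := by
      rw [← pow_add]; congr 1; omega
    rw [hmon, hp]
    exact Ideal.mul_mem_left _ _ (Ideal.mul_mem_left _ _ h2)
  by_cases hab : m 0 = 1 ∧ m 1 = 1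
  · have h2 : (X 0 : MvPolynomial (Fin 2) R) * X 1 ∈ idealC R :=
      Ideal.subset_span (by simp)
    rw [hmon, hab.1, hab.2, pow_one, pow_one, mul_assoc]
    exact Ideal.mul_mem_left _ _ h2
  · -- remaining: m is 0, single 0 1, or single 1 1; then coeff m g = 0
    exfalso
    apply MvPolynomial.mem_support_iff.mp hm
    have h0'' : m 0 = 0 ∨ m 0 = 1 := by omega
    have h1'' : m 1 = 0 ∨ m 1 = 1 := by omega
    rcases h0'' with h0' | h0' <;> rcases h1'' with h1' | h1'
    · rw [show m = 0 by rw [hdec, h0', h1']; simp]; exact h0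
    · rw [show m = Finsupp.single 1 1 by rw [hdec, h0', h1']; simp]; exact hy
    · rw [show m = Finsupp.single 0 1 by rw [hdec, h0', h1']; simp]; exact hx
    · exact absurd ⟨h0', h1'⟩ hab

lemma mkC_rep (c : MvPolynomial (Fin 2) R ⧸ idealC R) :
    ∃ a b e : R, c = Ideal.Quotient.mk (idealC R)
      (MvPolynomial.C a + MvPolynomial.C b * X 0 + MvPolynomial.C e * X 1) := by
  obtain ⟨g, rfl⟩ := Ideal.Quotient.mk_surjective c
  refine ⟨coeff 0 g, coeff (Finsupp.single 0 1) g, coeff (Finsupp.single 1 1) g, ?_⟩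
  rw [eq_comm, Ideal.Quotient.mk_eq_mk_iff_sub_mem]
  apply mem_idealC <;>
    simp [coeff_X', Finsupp.single_eq_single_iff, coeff_C, eq_comm,
      Finsupp.single_eq_zero]

end Aux

/-- Let `C = R[x,y]/(x², y², xy)` and let `π₁ : C → R[x]/(x²)`, `π₂ : C → R[y]/(y²)` be the
`R`-algebra homomorphisms sending `y` to `0` and `x` to `0` respectively, and let
`ε₁ : R[x]/(x²) → R`, `ε₂ : R[y]/(y²) → R` be the substitutions `x ↦ 0`, `y ↦ 0`.
Then for any `p`, `q` with `ε₁ p = ε₂ q` there exists a unique `c ∈ C` with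
`π₁ c = p` and `π₂ c = q`. -/
theorem quasiColimit_amalgamated_axes {R : Type*} [CommRing R]
    (π₁ : (MvPolynomial (Fin 2) R ⧸ idealC R) →ₐ[R] (Polynomial R ⧸ idealD R))
    (π₂ : (MvPolynomial (Fin 2) R ⧸ idealC R) →ₐ[R] (Polynomial R ⧸ idealD R))
    (h₁x : π₁ (Ideal.Quotient.mk (idealC R) (X 0)) = Ideal.Quotient.mk (idealD R) Polynomial.X)
    (h₁y : π₁ (Ideal.Quotient.mk (idealC R) (X 1)) = 0)
    (h₂x : π₂ (Ideal.Quotient.mk (idealC R) (X 0)) = 0)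
    (h₂y : π₂ (Ideal.Quotient.mk (idealC R) (X 1)) = Ideal.Quotient.mk (idealD R) Polynomial.X)
    (ε₁ ε₂ : (Polynomial R ⧸ idealD R) →ₐ[R] R)
    (hε₁ : ε₁ (Ideal.Quotient.mk (idealD R) Polynomial.X) = 0)
    (hε₂ : ε₂ (Ideal.Quotient.mk (idealD R) Polynomial.X) = 0)
    (p q : Polynomial R ⧸ idealD R) (h : ε₁ p = ε₂ q) :
    ∃! c : MvPolynomial (Fin 2) R ⧸ idealC R, π₁ c = p ∧ π₂ c = q := by
  have hCmk : ∀ r : R, Ideal.Quotient.mk (idealC R) (MvPolynomial.C r) = algebraMap R _ r := by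
    intro r; rw [← MvPolynomial.algebraMap_eq, Ideal.Quotient.mk_algebraMap]
  have hDmk : ∀ r : R, Ideal.Quotient.mk (idealD R) (Polynomial.C r) = algebraMap R _ r := by
    intro r; rw [← Polynomial.algebraMap_eq, Ideal.Quotient.mk_algebraMap]
  -- compute π₁, π₂ on standard representatives
  have hπ₁ : ∀ a b e : R, π₁ (Ideal.Quotient.mk (idealC R)
      (MvPolynomial.C a + MvPolynomial.C b * X 0 + MvPolynomial.C e * X 1)) =
      Ideal.Quotient.mk (idealD R) (Polynomial.C a + Polynomial.C b * Polynomial.X) := by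
    intro a b e
    simp only [map_add, map_mul, hCmk, AlgHom.commutes, h₁x, h₁y, mul_zero, add_zero, hDmk]
  have hπ₂ : ∀ a b e : R, π₂ (Ideal.Quotient.mk (idealC R)
      (MvPolynomial.C a + MvPolynomial.C b * X 0 + MvPolynomial.C e * X 1)) =
      Ideal.Quotient.mk (idealD R) (Polynomial.C a + Polynomial.C e * Polynomial.X) := by
    intro a b e
    simp only [map_add, map_mul, hCmk, AlgHom.commutes, h₂x, h₂y, mul_zero, add_zero, hDmk]
  obtain ⟨a, b, rfl⟩ := mkD_rep p
  obtain ⟨a', e, rfl⟩ := mkD_rep q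
  have ha : a = a' := by
    rw [eps_apply ε₁ hε₁, eps_apply ε₂ hε₂] at h; exact h
  subst ha
  refine ⟨Ideal.Quotient.mk (idealC R)
    (MvPolynomial.C a + MvPolynomial.C b * X 0 + MvPolynomial.C e * X 1),
    ⟨hπ₁ a b e, hπ₂ a b e⟩, ?_⟩
  rintro c ⟨hc1, hc2⟩
  obtain ⟨a₀, b₀, e₀, rfl⟩ := mkC_rep c
  rw [hπ₁ a₀ b₀ e₀] at hc1
  rw [hπ₂ a₀ b₀ e₀] at hc2
  rw [Ideal.Quotient.mk_eq_mk_iff_sub_mem, idealD, Ideal.mem_span_singleton,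
    Polynomial.X_pow_dvd_iff] at hc1 hc2
  have c10 := hc1 0 (by norm_num)
  have c11 := hc1 1 (by norm_num)
  have c20 := hc2 0 (by norm_num)
  have c21 := hc2 1 (by norm_num)
  simp only [Polynomial.coeff_sub, Polynomial.coeff_add, Polynomial.coeff_C_zero,
    Polynomial.coeff_C, Polynomial.mul_coeff_zero, Polynomial.coeff_X_zero, mul_zero,
    add_zero, Polynomial.coeff_C_mul, Polynomial.coeff_X_one, mul_one, one_ne_zero,
    if_false, if_true, zero_add, sub_eq_zero] at c10 c11 c20 c21
  rw [c10, c11, c21]
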